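/- Suppose two unbiased sampling schemes Φ and Ψ satisfy the same hypotheses: equal ΣV, Ψ has zero pairwise covariance, and Φ satisfies Var^Φ[ŵ_{[n]}] = 0. Then for all p ∈ [0,1], W_p^Φ = (1−p)·W_p^Ψ, where W_p is the expected variance over subsets including each item independently with probability p. -/

import Mathlib

open MeasureTheory ProbabilityTheory Finset

section Aux

variable {Ω : Type*} [MeasurableSpace Ω]

lemma aux_integrable_mul {μ : Measure Ω} {X Y : Ω → ℝ} (hX : MemLp X 2 μ) (hY : MemLp Y 2 μ) :
    Integrable (fun ω => X ω * Y ω) μ := by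
  have h1 := (hX.add hY).integrable_sq
  have h2 := hX.integrable_sq
  have h3 := hY.integrable_sq
  have : (fun ω => X ω * Y ω)
      = fun ω => (((X ω + Y ω) ^ 2 - X ω ^ 2) - Y ω ^ 2) / 2 := by
    funext ω; ring
  rw [this]
  exact ((h1.sub h2).sub h3).div_const 2

/-- Covariance-type term. -/
noncomputable def auxC {n : ℕ} (μ : Measure Ω) (h : Fin n → Ω → ℝ) (i j : Fin n) : ℝ :=
  (∫ ω, h i ω * h j ω ∂μ) - (∫ ω, h i ω ∂μ) * (∫ ω, h j ω ∂μ)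

/-- Variance of a finite sum equals the double sum of covariance terms. -/
lemma aux_variance_sum {μ : Measure Ω} [IsProbabilityMeasure μ] {n : ℕ} (h : Fin n → Ω → ℝ)
    (hh : ∀ i, MemLp (h i) 2 μ) (I : Finset (Fin n)) :
    variance (fun ω => ∑ i ∈ I, h i ω) μ = ∑ i ∈ I, ∑ j ∈ I, auxC μ h i j := by
  have hsum : MemLp (fun ω => ∑ i ∈ I, h i ω) 2 μ :=
    memLp_finset_sum I (fun i _ => hh i)
  rw [variance_eq_sub hsum]
  have h2 : (∫ ω, (∑ i ∈ I, h i ω) ^ 2 ∂μ)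
      = ∑ i ∈ I, ∑ j ∈ I, ∫ ω, h i ω * h j ω ∂μ := by
    have : ∀ ω, (∑ i ∈ I, h i ω) ^ 2 = ∑ i ∈ I, ∑ j ∈ I, h i ω * h j ω := by
      intro ω; rw [sq, Finset.sum_mul_sum]
    simp_rw [this]
    rw [integral_finset_sum]
    · refine Finset.sum_congr rfl fun i _ => ?_
      exact integral_finset_sum _ fun j _ => aux_integrable_mul (hh i) (hh j)
    · intro i _
      exact integrable_finset_sum _ fun j _ => aux_integrable_mul (hh i) (hh j)
  have h1 : (∫ ω, (∑ i ∈ I, h i ω) ∂μ) = ∑ i ∈ I, ∫ ω, h i ω ∂μ :=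
    integral_finset_sum _ fun i _ => (hh i).integrable one_le_two
  calc (∫ ω, (∑ i ∈ I, h i ω) ^ 2 ∂μ) - (∫ ω, (∑ i ∈ I, h i ω) ∂μ) ^ 2
      = (∑ i ∈ I, ∑ j ∈ I, ∫ ω, h i ω * h j ω ∂μ)
        - ∑ i ∈ I, ∑ j ∈ I, (∫ ω, h i ω ∂μ) * (∫ ω, h j ω ∂μ) := by
        rw [h2, h1, sq, Finset.sum_mul_sum]
    _ = _ := by rw [← Finset.sum_sub_distrib]
                exact Finset.sum_congr rfl fun i _ => (Finset.sum_sub_distrib _ _).symm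

/-- Inclusion probability: the total weight of subsets containing `S` is `p^|S|`. -/
lemma aux_incl {n : ℕ} (p : ℝ) (S : Finset (Fin n)) :
    ∑ I ∈ (Finset.univ : Finset (Fin n)).powerset,
        (if S ⊆ I then p ^ I.card * (1 - p) ^ (n - I.card) else 0)
      = p ^ S.card := by
  rw [← Finset.sum_filter]
  have hbij : ∑ I ∈ (Finset.univ : Finset (Fin n)).powerset.filter (fun I => S ⊆ I),
      p ^ I.card * (1 - p) ^ (n - I.card)
      = ∑ J ∈ ((Finset.univ : Finset (Fin n)) \ S).powerset,
        p ^ (J.card + S.card) * (1 - p) ^ ((n - S.card) - J.card) := by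
    refine Finset.sum_nbij' (fun I => I \ S) (fun J => J ∪ S) ?_ ?_ ?_ ?_ ?_
    · intro I hI
      simp only [Finset.mem_filter, Finset.mem_powerset] at hI ⊢
      exact Finset.sdiff_subset_sdiff hI.1 (le_refl S)
    · intro J hJ
      simp only [Finset.mem_filter, Finset.mem_powerset]
      exact ⟨Finset.subset_univ _, Finset.subset_union_right⟩
    · intro I hI
      simp only [Finset.mem_filter, Finset.mem_powerset] at hI
      exact Finset.sdiff_union_of_subset hI.2
    · intro J hJ
      simp only [Finset.mem_powerset] at hJ
      exact Finset.union_sdiff_cancel_right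
        (Finset.disjoint_of_subset_left hJ Finset.sdiff_disjoint)
    · intro I hI
      simp only [Finset.mem_filter, Finset.mem_powerset] at hI
      have hIn : I.card ≤ n := by
        simpa using Finset.card_le_card (Finset.subset_univ I)
      have hSc := Finset.card_le_card hI.2
      simp only [Finset.card_sdiff_of_subset hI.2]
      congr 1
      · congr 1; omega
      · congr 1; omega
  rw [hbij]
  have hc : ((Finset.univ : Finset (Fin n)) \ S).card = n - S.card := by
    rw [Finset.card_sdiff_of_subset (Finset.subset_univ S)]; simp
  have hbin : ∑ J ∈ ((Finset.univ : Finset (Fin n)) \ S).powerset,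
      p ^ J.card * (1 - p) ^ ((n - S.card) - J.card) = 1 := by
    have hpa := Finset.prod_add (fun _ : Fin n => p) (fun _ => 1 - p)
      ((Finset.univ : Finset (Fin n)) \ S)
    simp only [Finset.prod_const] at hpa
    have hone : p + (1 - p) = 1 := by ring
    rw [hone, one_pow] at hpa
    rw [← hc]
    calc ∑ J ∈ ((Finset.univ : Finset (Fin n)) \ S).powerset,
          p ^ J.card * (1 - p) ^ (((Finset.univ : Finset (Fin n)) \ S).card - J.card)
        = ∑ J ∈ ((Finset.univ : Finset (Fin n)) \ S).powerset,
          p ^ J.card * (1 - p) ^ ((((Finset.univ : Finset (Fin n)) \ S)) \ J).card := by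
          refine Finset.sum_congr rfl fun J hJ => ?_
          rw [Finset.card_sdiff_of_subset (Finset.mem_powerset.mp hJ)]
      _ = 1 := hpa.symm
  calc ∑ J ∈ ((Finset.univ : Finset (Fin n)) \ S).powerset,
        p ^ (J.card + S.card) * (1 - p) ^ ((n - S.card) - J.card)
      = p ^ S.card * ∑ J ∈ ((Finset.univ : Finset (Fin n)) \ S).powerset,
          p ^ J.card * (1 - p) ^ ((n - S.card) - J.card) := by
        rw [Finset.mul_sum]
        refine Finset.sum_congr rfl fun J _ => ?_
        rw [pow_add]; ring
    _ = p ^ S.card := by rw [hbin, mul_one]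

/-- Master formula: `W_p = p² · Var(total) + (p − p²) · ΣVar`. -/
lemma aux_master {μ : Measure Ω} [IsProbabilityMeasure μ] {n : ℕ} (h : Fin n → Ω → ℝ)
    (hh : ∀ i, MemLp (h i) 2 μ) (p : ℝ) :
    ∑ I ∈ (Finset.univ : Finset (Fin n)).powerset,
        p ^ I.card * (1 - p) ^ (n - I.card) * variance (fun ω => ∑ i ∈ I, h i ω) μ
      = p ^ 2 * variance (fun ω => ∑ i, h i ω) μ
        + (p - p ^ 2) * ∑ i, variance (h i) μ := by
  have hvc : ∀ i, variance (h i) μ = auxC μ h i i := by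
    intro i
    have := aux_variance_sum h hh {i}
    simpa using this
  have hLHS : ∑ I ∈ (Finset.univ : Finset (Fin n)).powerset,
      p ^ I.card * (1 - p) ^ (n - I.card) * variance (fun ω => ∑ i ∈ I, h i ω) μ
      = ∑ i, ∑ j, (if i = j then p else p ^ 2) * auxC μ h i j := by
    have step1 : ∀ I ∈ (Finset.univ : Finset (Fin n)).powerset,
        p ^ I.card * (1 - p) ^ (n - I.card) * variance (fun ω => ∑ i ∈ I, h i ω) μ
        = ∑ i, ∑ j, (if ({i, j} : Finset (Fin n)) ⊆ I
            then p ^ I.card * (1 - p) ^ (n - I.card) else 0) * auxC μ h i j := by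
      intro I _
      rw [aux_variance_sum h hh I]
      have key : ∀ i, ∑ j, (if ({i, j} : Finset (Fin n)) ⊆ I
            then p ^ I.card * (1 - p) ^ (n - I.card) else 0) * auxC μ h i j
          = if i ∈ I then p ^ I.card * (1 - p) ^ (n - I.card) * ∑ j ∈ I, auxC μ h i j
            else 0 := by
        intro i
        by_cases hiI : i ∈ I
        · simp only [hiI, if_true, Finset.mul_sum]
          rw [← Finset.sum_filter_add_sum_filter_not Finset.univ (· ∈ I)]
          have hz : ∑ j ∈ Finset.univ.filter (· ∉ I),
              (if ({i, j} : Finset (Fin n)) ⊆ I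
                then p ^ I.card * (1 - p) ^ (n - I.card) else 0) * auxC μ h i j = 0 := by
            refine Finset.sum_eq_zero fun j hj => ?_
            simp only [Finset.mem_filter] at hj
            have : ¬ ({i, j} : Finset (Fin n)) ⊆ I := fun hsub =>
              hj.2 (hsub (by simp))
            simp [this]
          rw [hz, add_zero]
          have hfe : Finset.univ.filter (· ∈ I) = I := by
            ext x; simp
          rw [hfe]
          refine Finset.sum_congr rfl fun j hj => ?_
          have : ({i, j} : Finset (Fin n)) ⊆ I := by
            intro x hx
            simp only [Finset.mem_insert, Finset.mem_singleton] at hx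
            rcases hx with rfl | rfl
            · exact hiI
            · exact hj
          simp [this]
        · rw [if_neg hiI]
          refine Finset.sum_eq_zero fun j _ => ?_
          have : ¬ ({i, j} : Finset (Fin n)) ⊆ I := fun hsub =>
            hiI (hsub (by simp))
          simp [this]
      rw [Finset.sum_congr rfl (fun i _ => key i), ← Finset.sum_filter]
      have hfe : Finset.univ.filter (· ∈ I) = I := by ext x; simp
      rw [hfe, Finset.mul_sum]
    rw [Finset.sum_congr rfl step1, Finset.sum_comm]
    refine Finset.sum_congr rfl fun i _ => ?_
    rw [Finset.sum_comm]
    refine Finset.sum_congr rfl fun j _ => ?_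
    rw [← Finset.sum_mul]
    congr 1
    rw [aux_incl p ({i, j} : Finset (Fin n))]
    by_cases hij : i = j
    · subst hij; simp
    · have : ({i, j} : Finset (Fin n)).card = 2 := Finset.card_pair hij
      rw [this]
      simp [hij]
  have hTotal : variance (fun ω => ∑ i, h i ω) μ = ∑ i, ∑ j, auxC μ h i j :=
    aux_variance_sum h hh Finset.univ
  have hD : ∑ i, variance (h i) μ = ∑ i, auxC μ h i i :=
    Finset.sum_congr rfl fun i _ => hvc i
  rw [hLHS, hTotal, hD]
  have hsplit : ∀ i j : Fin n, (if i = j then p else p ^ 2) * auxC μ h i j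
      = p ^ 2 * auxC μ h i j + (if i = j then (p - p ^ 2) * auxC μ h i j else 0) := by
    intro i j; by_cases hij : i = j <;> simp [hij] <;> ring
  simp_rw [hsplit, Finset.sum_add_distrib, Finset.sum_ite_eq, Finset.mem_univ, if_true,
    ← Finset.mul_sum]

end Aux

/-- The `p`-version of the systematic-vs-threshold comparison: under the same
hypotheses (equal `ΣV`, `g` has zero pairwise covariance, `f` estimates the
total exactly), for all `p ∈ [0,1]` we have `W_p^f = (1−p)·W_p^g`. -/
theorem Wp_zero_total_variance_vs_no_covariance
    {Ω₁ Ω₂ : Type*} [MeasurableSpace Ω₁] [MeasurableSpace Ω₂]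
    (μ₁ : Measure Ω₁) (μ₂ : Measure Ω₂)
    [IsProbabilityMeasure μ₁] [IsProbabilityMeasure μ₂]
    (n : ℕ) (w : Fin n → ℝ)
    (f : Fin n → Ω₁ → ℝ) (g : Fin n → Ω₂ → ℝ)
    (hf2 : ∀ i, MemLp (f i) 2 μ₁) (hg2 : ∀ i, MemLp (g i) 2 μ₂)
    (hfu : ∀ i, ∫ ω, f i ω ∂μ₁ = w i) (hgu : ∀ i, ∫ ω, g i ω ∂μ₂ = w i)
    (hsameSV : ∑ i, variance (f i) μ₁ = ∑ i, variance (g i) μ₂)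
    (hg_nocov : variance (fun ω => ∑ i, g i ω) μ₂ = ∑ i, variance (g i) μ₂)
    (hf_total : variance (fun ω => ∑ i, f i ω) μ₁ = 0)
    (p : ℝ) (hp0 : 0 ≤ p) (hp1 : p ≤ 1) :
    ∑ I ∈ (Finset.univ : Finset (Fin n)).powerset,
        p ^ I.card * (1 - p) ^ (n - I.card) *
          variance (fun ω => ∑ i ∈ I, f i ω) μ₁
      = (1 - p) *
        ∑ I ∈ (Finset.univ : Finset (Fin n)).powerset,
          p ^ I.card * (1 - p) ^ (n - I.card) *
            variance (fun ω => ∑ i ∈ I, g i ω) μ₂ := by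
  rw [aux_master f hf2 p, aux_master g hg2 p, hf_total, hg_nocov, hsameSV]
  ring
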